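/- Let Z be a set of 2^s - 1 points in a geometrically symmetric Cantor construction. If Z is NOT uniformly distributed, then there exists a basic interval of level at least s containing exactly 2 points of Z. Equivalently: if the maximal level R such that some level-R basic interval contains exactly 2 points of Z satisfies R ≤ s-1, then Z is uniformly distributed. -/

import Mathlib

private def cnt (Z : Finset (ℕ → Bool)) (k : ℕ) (w : Fin k → Bool) : ℕ :=
  (Z.filter (fun z => ∀ i : Fin k, z i.1 = w i)).card

private lemma cnt_mono (Z : Finset (ℕ → Bool)) {k K : ℕ} (h : k ≤ K) (w : Fin K → Bool) :
    cnt Z K w ≤ cnt Z k (fun i => w (Fin.castLE h i)) := by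
  classical
  apply Finset.card_le_card
  intro z hz
  simp only [Finset.mem_filter] at *
  exact ⟨hz.1, fun i => hz.2 (Fin.castLE h i)⟩

private lemma cnt_split (Z : Finset (ℕ → Bool)) (k : ℕ) (w : Fin k → Bool) :
    cnt Z k w = cnt Z (k+1) (Fin.snoc w false) + cnt Z (k+1) (Fin.snoc w true) := by
  classical
  have key : ∀ b : Bool,
      Z.filter (fun z => ∀ i : Fin (k+1), z i.1 = (Fin.snoc w b : Fin (k+1) → Bool) i)
        = (Z.filter (fun z => ∀ i : Fin k, z i.1 = w i)).filter (fun z => z k = b) := by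
    intro b
    ext z
    simp only [Finset.mem_filter]
    constructor
    · rintro ⟨hz, h⟩
      refine ⟨⟨hz, fun i => ?_⟩, ?_⟩
      · have := h i.castSucc
        simpa [Fin.snoc_castSucc] using this
      · have := h (Fin.last k)
        simpa [Fin.snoc_last] using this
    · rintro ⟨⟨hz, h⟩, hk⟩
      refine ⟨hz, fun i => ?_⟩
      cases i using Fin.lastCases with
      | last => simpa [Fin.snoc_last] using hk
      | cast j => simpa [Fin.snoc_castSucc] using h j
  have hpart := Finset.card_filter_add_card_filter_not
    (s := Z.filter (fun z => ∀ i : Fin k, z i.1 = w i)) (p := fun z => z k = false)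
  have hneg : (Z.filter (fun z => ∀ i : Fin k, z i.1 = w i)).filter (fun a => ¬ a k = false)
      = (Z.filter (fun z => ∀ i : Fin k, z i.1 = w i)).filter (fun z => z k = true) := by
    apply Finset.filter_congr
    intro z _
    simp
  unfold cnt
  rw [key false, key true, ← hpart, hneg]

private lemma cnt_sep (Z : Finset (ℕ → Bool)) : ∃ K, ∀ v : Fin K → Bool, cnt Z K v ≤ 1 := by
  classical
  have hdiff : ∀ z z' : ℕ → Bool, z ≠ z' → ∃ n, z n ≠ z' n := by
    intro z z' h
    by_contra hc
    push_neg at hc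
    exact h (funext hc)
  set g : (ℕ → Bool) × (ℕ → Bool) → ℕ := fun p =>
    if h : p.1 = p.2 then 0 else Nat.find (hdiff p.1 p.2 h) with hgdef
  refine ⟨(Z ×ˢ Z).sup g + 1, fun v => ?_⟩
  rw [cnt]
  apply Finset.card_le_one.mpr
  intro a ha b hb
  simp only [Finset.mem_filter] at ha hb
  by_contra hab
  have hn : g (a, b) ≤ (Z ×ˢ Z).sup g :=
    Finset.le_sup (Finset.mem_product.mpr ⟨ha.1, hb.1⟩)
  have hg : a (g (a, b)) ≠ b (g (a, b)) := by
    simp only [hgdef, dif_neg hab]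
    exact Nat.find_spec (hdiff a b hab)
  have hlt : g (a, b) < (Z ×ˢ Z).sup g + 1 := Nat.lt_succ_of_le hn
  have h1 := ha.2 ⟨g (a, b), hlt⟩
  have h2 := hb.2 ⟨g (a, b), hlt⟩
  exact hg (h1.trans h2.symm)

private lemma cnt_descend (Z : Finset (ℕ → Bool)) {K₀ : ℕ}
    (hsep : ∀ v : Fin K₀ → Bool, cnt Z K₀ v ≤ 1) :
    ∀ n k (w : Fin k → Bool), K₀ ≤ k + n → 2 ≤ cnt Z k w →
      ∃ k', k ≤ k' ∧ ∃ w' : Fin k' → Bool, cnt Z k' w' = 2 := by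
  intro n
  induction n with
  | zero =>
    intro k w hK h2
    have hk : K₀ ≤ k := by omega
    have := le_trans (cnt_mono Z hk w) (hsep _)
    omega
  | succ n ih =>
    intro k w hK h2
    rcases Nat.lt_or_ge (cnt Z (k+1) (Fin.snoc w false)) 2 with h0 | h0
    · rcases Nat.lt_or_ge (cnt Z (k+1) (Fin.snoc w true)) 2 with h1 | h1
      · refine ⟨k, le_rfl, w, ?_⟩
        have := cnt_split Z k w
        omega
      · obtain ⟨k', hk', r⟩ := ih (k+1) (Fin.snoc w true) (by omega) h1
        exact ⟨k', by omega, r⟩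
    · obtain ⟨k', hk', r⟩ := ih (k+1) (Fin.snoc w false) (by omega) h0
      exact ⟨k', by omega, r⟩

private lemma cnt_fiber (Z : Finset (ℕ → Bool)) {k K : ℕ} (h : k ≤ K) (w : Fin k → Bool) :
    cnt Z k w = ∑ v ∈ Finset.univ.filter
        (fun v : Fin K → Bool => ∀ i : Fin k, v (Fin.castLE h i) = w i),
      cnt Z K v := by
  classical
  rw [cnt]
  rw [Finset.card_eq_sum_card_fiberwise
    (f := fun z (i : Fin K) => z i.1)
    (t := Finset.univ.filter (fun v : Fin K → Bool => ∀ i : Fin k, v (Fin.castLE h i) = w i))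
    (fun z hz => by
      simp only [Finset.mem_coe, Finset.mem_filter] at hz ⊢
      exact ⟨Finset.mem_univ _, fun i => hz.2 i⟩)]
  apply Finset.sum_congr rfl
  intro v hv
  simp only [Finset.mem_filter, Finset.mem_univ, true_and] at hv
  rw [cnt]
  congr 1
  ext z
  simp only [Finset.mem_filter]
  constructor
  · rintro ⟨⟨hz, _⟩, hf⟩
    exact ⟨hz, fun i => congrFun hf i⟩
  · rintro ⟨hz, hp⟩
    exact ⟨⟨hz, fun i => (hp (Fin.castLE h i)).trans (hv i)⟩, funext fun i => hp i⟩

private lemma cnt_total (Z : Finset (ℕ → Bool)) (K : ℕ) :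
    ∑ v : Fin K → Bool, cnt Z K v = Z.card := by
  classical
  have h := cnt_fiber Z (Nat.zero_le K) (fun _ : Fin 0 => false)
  rw [cnt] at h
  rw [Finset.filter_true_of_mem (fun z _ => fun i => i.elim0)] at h
  rw [Finset.filter_true_of_mem (fun v _ => fun i => i.elim0)] at h
  exact h.symm

theorem stmt_1 (s : ℕ) (hs : 1 ≤ s) (Z : Finset (ℕ → Bool))
    (hcard : Z.card = 2 ^ s - 1)
    (m : ∀ k : ℕ, (Fin k → Bool) → ℕ)
    (hm : ∀ (k : ℕ) (w : Fin k → Bool),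
      m k w = (Z.filter (fun z => ∀ i : Fin k, z i.1 = w i)).card)
    (hnonunif : ¬ (∀ (k : ℕ) (w w' : Fin k → Bool), (m k w : ℤ) - m k w' ≤ 1)) :
    ∃ k : ℕ, s ≤ k ∧ ∃ w : Fin k → Bool, m k w = 2 := by
  classical
  by_contra hcon
  push_neg at hcon
  apply hnonunif
  have hmc : ∀ k w, m k w = cnt Z k w := fun k w => hm k w
  obtain ⟨K₀, hsep⟩ := cnt_sep Z
  -- every level-s interval has at most one point
  have hle1 : ∀ v : Fin s → Bool, cnt Z s v ≤ 1 := by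
    intro v
    by_contra hc
    push_neg at hc
    obtain ⟨k', hk', w', hw'⟩ := cnt_descend Z hsep K₀ s v (by omega) hc
    exact hcon k' hk' w' (by rw [hmc]; exact hw')
  have h2s : 2 ≤ 2 ^ s := by
    calc (2 : ℕ) = 2 ^ 1 := rfl
    _ ≤ 2 ^ s := Nat.pow_le_pow_right (by norm_num) hs
  have hcardU : (Finset.univ : Finset (Fin s → Bool)).card = 2 ^ s := by
    simp [Finset.card_univ]
  have htot : ∑ v : Fin s → Bool, cnt Z s v = 2 ^ s - 1 := by
    rw [cnt_total, hcard]
  -- at most one level-s interval is empty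
  have hzero : ∀ v v' : Fin s → Bool, cnt Z s v = 0 → cnt Z s v' = 0 → v = v' := by
    intro v v' h0 h0'
    by_contra hne
    have hsub : ({v, v'} : Finset (Fin s → Bool)) ⊆ Finset.univ := Finset.subset_univ _
    have hsplit := Finset.sum_sdiff (f := cnt Z s) hsub
    have hpair : ∑ x ∈ ({v, v'} : Finset (Fin s → Bool)), cnt Z s x = 0 := by
      rw [Finset.sum_pair hne, h0, h0']
    have hbound : ∑ x ∈ Finset.univ \ ({v, v'} : Finset (Fin s → Bool)), cnt Z s x
        ≤ (Finset.univ \ ({v, v'} : Finset (Fin s → Bool))).card := by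
      have := Finset.sum_le_card_nsmul (Finset.univ \ ({v, v'} : Finset (Fin s → Bool)))
        (cnt Z s) 1 (fun x _ => hle1 x)
      simpa using this
    have hcard2 : ({v, v'} : Finset (Fin s → Bool)).card = 2 := Finset.card_pair hne
    have hcsd : (Finset.univ \ ({v, v'} : Finset (Fin s → Bool))).card
        = (Finset.univ : Finset (Fin s → Bool)).card - 2 := by
      rw [Finset.card_sdiff_of_subset hsub, hcard2]
    omega
  -- two-sided estimate at level k ≤ s
  have key : ∀ (hks : s ≤ s) (k : ℕ) (hk : k ≤ s) (u : Fin k → Bool),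
      cnt Z k u ≤ (Finset.univ.filter
        (fun v : Fin s → Bool => ∀ i : Fin k, v (Fin.castLE hk i) = u i)).card ∧
      (Finset.univ.filter
        (fun v : Fin s → Bool => ∀ i : Fin k, v (Fin.castLE hk i) = u i)).card
        ≤ cnt Z k u + 1 := by
    intro _ k hk u
    set T := Finset.univ.filter
      (fun v : Fin s → Bool => ∀ i : Fin k, v (Fin.castLE hk i) = u i) with hT
    rw [cnt_fiber Z hk u]
    constructor
    · have := Finset.sum_le_card_nsmul T (cnt Z s) 1 (fun v _ => hle1 v)
      simpa using this
    · set T0 := T.filter (fun v => cnt Z s v = 0) with hT0def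
      have hT0 : T0.card ≤ 1 := Finset.card_le_one.mpr (by
        intro a ha b hb
        simp only [hT0def, Finset.mem_filter] at ha hb
        exact hzero a b ha.2 hb.2)
      have hsub : T0 ⊆ T := Finset.filter_subset _ _
      have h1 : (T \ T0).card ≤ ∑ v ∈ T \ T0, cnt Z s v := by
        have := Finset.card_nsmul_le_sum (T \ T0) (cnt Z s) 1 (by
          intro v hv
          simp only [Finset.mem_sdiff] at hv
          refine Nat.one_le_iff_ne_zero.mpr (fun h0 => hv.2 ?_)
          simp only [hT0def, Finset.mem_filter]
          exact ⟨hv.1, h0⟩)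
        simpa using this
      have h2 : ∑ v ∈ T \ T0, cnt Z s v ≤ ∑ v ∈ T, cnt Z s v :=
        Finset.sum_le_sum_of_subset Finset.sdiff_subset
      have h3 : (T \ T0).card = T.card - T0.card := Finset.card_sdiff_of_subset hsub
      calc T.card = (T \ T0).card + T0.card :=
            (Finset.card_sdiff_add_card_eq_card hsub).symm
        _ ≤ (∑ v ∈ T \ T0, cnt Z s v) + 1 := Nat.add_le_add h1 hT0
        _ ≤ (∑ v ∈ T, cnt Z s v) + 1 := Nat.add_le_add_right h2 1
  -- main uniformity claim
  intro k w w'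
  rw [hmc, hmc]
  rcases le_total k s with hks | hks
  · have hw := key le_rfl k hks w
    have hw' := key le_rfl k hks w'
    have hTcard : (Finset.univ.filter
          (fun v : Fin s → Bool => ∀ i : Fin k, v (Fin.castLE hks i) = w i)).card
        = (Finset.univ.filter
          (fun v : Fin s → Bool => ∀ i : Fin k, v (Fin.castLE hks i) = w' i)).card := by
      apply Finset.card_bij'
        (i := fun v _ => fun j : Fin s => if h : j.1 < k then w' ⟨j.1, h⟩ else v j)
        (j := fun v _ => fun j : Fin s => if h : j.1 < k then w ⟨j.1, h⟩ else v j)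
      · intro a ha
        simp only [Finset.mem_filter, Finset.mem_univ, true_and]
        intro i
        have hcl : (Fin.castLE hks i).1 < k := by
          simp [i.isLt]
        rw [dif_pos hcl]
        exact congrArg _ (Fin.ext rfl)
      · intro a ha
        simp only [Finset.mem_filter, Finset.mem_univ, true_and]
        intro i
        have hcl : (Fin.castLE hks i).1 < k := by
          simp [i.isLt]
        rw [dif_pos hcl]
        exact congrArg _ (Fin.ext rfl)
      · intro a ha
        simp only [Finset.mem_filter, Finset.mem_univ, true_and] at ha
        funext j
        by_cases h : j.1 < k
        · simp only [dif_pos h]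
          have := ha ⟨j.1, h⟩
          have hj : Fin.castLE hks (⟨j.1, h⟩ : Fin k) = j := by
            apply Fin.ext; rfl
          rw [hj] at this
          exact this.symm
        · simp only [dif_neg h]
      · intro a ha
        simp only [Finset.mem_filter, Finset.mem_univ, true_and] at ha
        funext j
        by_cases h : j.1 < k
        · simp only [dif_pos h]
          have := ha ⟨j.1, h⟩
          have hj : Fin.castLE hks (⟨j.1, h⟩ : Fin k) = j := by
            apply Fin.ext; rfl
          rw [hj] at this
          exact this.symm
        · simp only [dif_neg h]
    have a1 := hw.1
    have a2 := hw'.2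
    rw [hTcard] at a1
    have h5 : cnt Z k w ≤ cnt Z k w' + 1 := a1.trans a2
    have h6 : (cnt Z k w : ℤ) ≤ (cnt Z k w' : ℤ) + 1 := by exact_mod_cast h5
    linarith
  · have h1 : cnt Z k w ≤ 1 := le_trans (cnt_mono Z hks w) (hle1 _)
    have h2 : (cnt Z k w : ℤ) ≤ 1 := by exact_mod_cast h1
    have h3 : (0 : ℤ) ≤ (cnt Z k w' : ℤ) := Int.natCast_nonneg _
    linarith
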